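/- A Hausdorff space X is ultraparacompact if and only if X is ultranormal and paracompact. -/
import Mathlib


/-- A partition of the space `X` into (nonempty, pairwise disjoint) clopen sets. -/
def IsClopenPartition (X : Type*) [TopologicalSpace X] (P : Set (Set X)) : Prop :=
  (∀ S ∈ P, IsClopen S) ∧ (∀ S ∈ P, S.Nonempty) ∧
    (∀ S ∈ P, ∀ T ∈ P, S ≠ T → S ∩ T = ∅) ∧ ⋃₀ P = Set.univ

/-- A space is ultraparacompact if every open cover has a refinement that is a
partition of the space into clopen sets. -/
def Ultraparacompact (X : Type*) [TopologicalSpace X] : Prop :=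
  ∀ 𝒰 : Set (Set X), (∀ U ∈ 𝒰, IsOpen U) → ⋃₀ 𝒰 = Set.univ →
    ∃ P : Set (Set X), IsClopenPartition X P ∧ ∀ S ∈ P, ∃ U ∈ 𝒰, S ⊆ U

/-- A space is ultranormal if any two disjoint closed sets are separated by a clopen set. -/
def Ultranormal (X : Type*) [TopologicalSpace X] : Prop :=
  ∀ R S : Set X, IsClosed R → IsClosed S → Disjoint R S →
    ∃ C : Set X, IsClopen C ∧ R ⊆ C ∧ S ∩ C = ∅

/-- A space is zero-dimensional if the clopen sets form a basis for the topology. -/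
def ZeroDimensional (X : Type*) [TopologicalSpace X] : Prop :=
  TopologicalSpace.IsTopologicalBasis {s : Set X | IsClopen s}

/-- A Hausdorff space is ultraparacompact iff it is ultranormal and paracompact. -/
theorem ultraparacompact_iff_ultranormal_paracompact (X : Type*) [TopologicalSpace X]
    [T2Space X] :
    Ultraparacompact X ↔ Ultranormal X ∧ ParacompactSpace X := by
  constructor
  · intro h
    constructor
    · -- Ultranormal
      intro R S hR hS hRS
      obtain ⟨P, ⟨hcl, hne, hdisj, hcov⟩, href⟩ := h {Rᶜ, Sᶜ}
        (by rintro U (rfl | rfl)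
            exacts [hR.isOpen_compl, hS.isOpen_compl])
        (by rw [Set.sUnion_pair, ← Set.compl_inter,
              Set.disjoint_iff_inter_eq_empty.mp hRS, Set.compl_empty])
      refine ⟨⋃₀ {T ∈ P | (T ∩ R).Nonempty}, ⟨?_, ?_⟩, ?_, ?_⟩
      · -- closed: complement is open
        have hcompl : (⋃₀ {T ∈ P | (T ∩ R).Nonempty})ᶜ = ⋃₀ {T ∈ P | T ∩ R = ∅} := by
          ext x
          constructor
          · intro hx
            have hxuniv : x ∈ ⋃₀ P := by rw [hcov]; trivial
            obtain ⟨T₀, hT₀, hxT₀⟩ := hxuniv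
            refine ⟨T₀, ⟨hT₀, ?_⟩, hxT₀⟩
            by_contra hTR
            exact hx ⟨T₀, ⟨hT₀, Set.nonempty_iff_ne_empty.mpr hTR⟩, hxT₀⟩
          · rintro ⟨T, ⟨hT, hTR⟩, hxT⟩ ⟨T', ⟨hT', hT'R⟩, hxT'⟩
            have hne' : T ≠ T' := by
              rintro rfl
              rw [hTR] at hT'R
              exact hT'R.ne_empty rfl
            have hmem : x ∈ T ∩ T' := ⟨hxT, hxT'⟩
            rw [hdisj T hT T' hT' hne'] at hmem
            exact hmem
        rw [← isOpen_compl_iff, hcompl]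
        exact isOpen_sUnion fun T hT => (hcl T hT.1).isOpen
      · exact isOpen_sUnion fun T hT => (hcl T hT.1).isOpen
      · -- R ⊆ C
        intro r hr
        have : r ∈ ⋃₀ P := by rw [hcov]; trivial
        obtain ⟨T, hT, hrT⟩ := this
        exact ⟨T, ⟨hT, ⟨r, hrT, hr⟩⟩, hrT⟩
      · -- S ∩ C = ∅
        ext x
        simp only [Set.mem_inter_iff, Set.mem_empty_iff_false, iff_false, not_and]
        rintro hxS ⟨T, ⟨hT, hTR⟩, hxT⟩
        obtain ⟨U, hU, hsub⟩ := href T hT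
        rcases hU with rfl | rfl
        · obtain ⟨y, hyT, hyR⟩ := hTR
          exact hsub hyT hyR
        · exact hsub hxT hxS
    · -- Paracompact
      constructor
      intro α s hso hsU
      obtain ⟨P, ⟨hcl, hne, hdisj, hcov⟩, href⟩ := h (Set.range s)
        (by rintro U ⟨a, rfl⟩; exact hso a)
        (by rwa [Set.sUnion_range])
      refine ⟨P, fun b => (b : Set X), fun b => (hcl b b.2).isOpen, ?_, ?_, ?_⟩
      · rw [← Set.sUnion_eq_iUnion, hcov]
      · -- locally finite
        intro x
        have : x ∈ ⋃₀ P := by rw [hcov]; trivial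
        obtain ⟨T₀, hT₀, hxT₀⟩ := this
        refine ⟨T₀, (hcl T₀ hT₀).isOpen.mem_nhds hxT₀, ?_⟩
        refine (Set.finite_singleton (⟨T₀, hT₀⟩ : P)).subset ?_
        rintro ⟨T, hT⟩ hTne
        simp only [Set.mem_setOf_eq] at hTne
        simp only [Set.mem_singleton_iff, Subtype.ext_iff]
        by_contra hne'
        have := hdisj T hT T₀ hT₀ hne'
        rw [this] at hTne
        exact hTne.ne_empty rfl
      · rintro ⟨T, hT⟩
        obtain ⟨U, ⟨a, rfl⟩, hsub⟩ := href T hT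
        exact ⟨a, hsub⟩
  · rintro ⟨hun, hpc⟩ 𝒰 h𝒰o h𝒰U
    -- precise locally finite refinement indexed by 𝒰
    obtain ⟨v, hvo, hvU, hvlf, hvsub⟩ := precise_refinement (X := X) (fun U : 𝒰 => (U : Set X))
      (fun U => h𝒰o U U.2) (by rw [← Set.sUnion_eq_iUnion]; exact h𝒰U)
    -- shrink to a closed cover
    obtain ⟨F, hFcov, hFcl, hFsub⟩ := exists_subset_iUnion_closed_subset (s := Set.univ)
      isClosed_univ hvo (fun x _ => hvlf.point_finite x) (by rw [hvU])
    -- separate F i from (v i)ᶜ by a clopen set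
    have hsep : ∀ i, ∃ C : Set X, IsClopen C ∧ F i ⊆ C ∧ C ⊆ v i := by
      intro i
      obtain ⟨C, hCcl, hFC, hCint⟩ := hun (F i) (v i)ᶜ (hFcl i) (hvo i).isClosed_compl
        (Set.disjoint_compl_right_iff_subset.mpr (hFsub i))
      refine ⟨C, hCcl, hFC, ?_⟩
      intro x hx
      by_contra hxv
      have hmem : x ∈ (v i)ᶜ ∩ C := ⟨hxv, hx⟩
      rw [hCint] at hmem
      exact hmem
    choose C hCcl hFC hCv using hsep
    have hClf : LocallyFinite C := hvlf.subset hCv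
    -- disjointify along a well-order
    let r : 𝒰 → 𝒰 → Prop := WellOrderingRel
    let D : 𝒰 → Set X := fun i => C i \ ⋃ j ∈ {j | r j i}, C j
    have hDcl : ∀ i, IsClopen (D i) := by
      intro i
      refine (hCcl i).diff ⟨?_, ?_⟩
      · rw [Set.biUnion_eq_iUnion]
        exact (hClf.comp_injective Subtype.val_injective).isClosed_iUnion
          fun j => (hCcl _).isClosed
      · exact isOpen_biUnion fun j _ => (hCcl j).isOpen
    have hDC : ∀ i, D i ⊆ C i := fun i => Set.diff_subset
    have hDcov : ∀ x : X, ∃ i, x ∈ D i := by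
      intro x
      have hx : x ∈ ⋃ i, F i := hFcov trivial
      have hns : {i | x ∈ C i}.Nonempty := by
        obtain ⟨i, hi⟩ := Set.mem_iUnion.mp hx
        exact ⟨i, hFC i hi⟩
      obtain ⟨i, hi, hmin⟩ := (IsWellFounded.wf (r := r)).has_min _ hns
      refine ⟨i, hi, ?_⟩
      intro hmem
      obtain ⟨j, hj⟩ := Set.mem_iUnion.mp hmem
      obtain ⟨hjr, hxj⟩ := Set.mem_iUnion.mp hj
      exact hmin j hxj hjr
    have hDdisj : ∀ i j, i ≠ j → D i ∩ D j = ∅ := by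
      intro i j hij
      rcases trichotomous_of r i j with hrij | rfl | hrji
      · ext x
        simp only [Set.mem_inter_iff, Set.mem_empty_iff_false, iff_false, not_and]
        intro hxi hxj
        exact hxj.2 (Set.mem_biUnion hrij hxi.1)
      · exact absurd rfl hij
      · ext x
        simp only [Set.mem_inter_iff, Set.mem_empty_iff_false, iff_false, not_and]
        intro hxi hxj
        exact hxi.2 (Set.mem_biUnion hrji hxj.1)
    refine ⟨{T | ∃ i, T = D i ∧ T.Nonempty}, ⟨?_, ?_, ?_, ?_⟩, ?_⟩
    · rintro S ⟨i, rfl, -⟩; exact hDcl i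
    · rintro S ⟨i, rfl, hne⟩; exact hne
    · rintro S ⟨i, rfl, -⟩ T ⟨j, rfl, -⟩ hST
      exact hDdisj i j (fun h => hST (by rw [h]))
    · ext x
      simp only [Set.mem_univ, iff_true]
      obtain ⟨i, hi⟩ := hDcov x
      exact ⟨D i, ⟨i, rfl, ⟨x, hi⟩⟩, hi⟩
    · rintro S ⟨i, rfl, -⟩
      exact ⟨i, i.2, (hDC i).trans ((hCv i).trans (hvsub i))⟩
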